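/- Every hornGF-formula φ(x̄) is equivalent to a Horn first-order formula, i.e., there is a Horn formula ψ(x̄) with the same free variables such that for every τ-structure 𝔄 and every assignment of the free variables: 𝔄 ⊨ φ iff 𝔄 ⊨ ψ. -/

import Mathlib

/-- A τ-structure for a vocabulary `Rel` of predicate names of arities `ar`. -/
structure GStr (Rel : Type) (ar : Rel → ℕ) (D : Type) where
  interp : ∀ R : Rel, Set (Fin (ar R) → D)

/-- First-order formulas over the vocabulary `(Rel, ar)` (with equality), using
natural numbers as variables; `ex`/`all` quantify simultaneously over a list of
variables. -/
inductive GFO (Rel : Type) (ar : Rel → ℕ) where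
  | top : GFO Rel ar
  | bot : GFO Rel ar
  | eq : ℕ → ℕ → GFO Rel ar
  | rel : (R : Rel) → (Fin (ar R) → ℕ) → GFO Rel ar
  | not : GFO Rel ar → GFO Rel ar
  | and : GFO Rel ar → GFO Rel ar → GFO Rel ar
  | or : GFO Rel ar → GFO Rel ar → GFO Rel ar
  | imp : GFO Rel ar → GFO Rel ar → GFO Rel ar
  | ex : List ℕ → GFO Rel ar → GFO Rel ar
  | all : List ℕ → GFO Rel ar → GFO Rel ar

variable {Rel : Type} {ar : Rel → ℕ} {D D1 D2 : Type}

/-- Satisfaction of a formula in a structure under a valuation. -/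
def GFO.sem (M : GStr Rel ar D) : GFO Rel ar → (ℕ → D) → Prop
  | .top, _ => True
  | .bot, _ => False
  | .eq x y, v => v x = v y
  | .rel R t, v => (fun i => v (t i)) ∈ M.interp R
  | .not φ, v => ¬ φ.sem M v
  | .and φ ψ, v => φ.sem M v ∧ ψ.sem M v
  | .or φ ψ, v => φ.sem M v ∨ ψ.sem M v
  | .imp φ ψ, v => φ.sem M v → ψ.sem M v
  | .ex ys φ, v => ∃ w : ℕ → D, (∀ n, n ∉ ys → w n = v n) ∧ φ.sem M w
  | .all ys φ, v => ∀ w : ℕ → D, (∀ n, n ∉ ys → w n = v n) → φ.sem M w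

/-- The free variables of a formula. -/
def GFO.free : GFO Rel ar → Set ℕ
  | .top | .bot => ∅
  | .eq x y => {x, y}
  | .rel _ t => Set.range t
  | .not φ => φ.free
  | .and φ ψ | .or φ ψ | .imp φ ψ => φ.free ∪ ψ.free
  | .ex ys φ | .all ys φ => φ.free \ {n | n ∈ ys}

/-- The quantifier (nesting) depth of a formula. -/
def GFO.qdepth : GFO Rel ar → ℕ
  | .top | .bot | .eq _ _ | .rel _ _ => 0
  | .not φ => φ.qdepth
  | .and φ ψ | .or φ ψ | .imp φ ψ => max φ.qdepth ψ.qdepth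
  | .ex _ φ | .all _ φ => φ.qdepth + 1

/-- Atomic formulas. -/
inductive GFO.IsAtom : GFO Rel ar → Prop
  | eq (x y : ℕ) : IsAtom (.eq x y)
  | rel (R : Rel) (t : Fin (ar R) → ℕ) : IsAtom (.rel R t)

/-- The positive existential guarded fragment GF∃: built from atomic formulas using
∧, ∨ and guarded existential quantification `∃ȳ(G(x̄ȳ) ∧ φ(x̄ȳ))`. -/
inductive GFO.IsGFex : GFO Rel ar → Prop
  | atom {φ : GFO Rel ar} : IsAtom φ → IsGFex φ
  | and {φ ψ : GFO Rel ar} : IsGFex φ → IsGFex ψ → IsGFex (.and φ ψ)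
  | or {φ ψ : GFO Rel ar} : IsGFex φ → IsGFex ψ → IsGFex (.or φ ψ)
  | ex {G φ : GFO Rel ar} (ys : List ℕ) : IsAtom G → φ.free ⊆ G.free →
      (∀ y ∈ ys, y ∈ G.free) → IsGFex φ → IsGFex (.ex ys (.and G φ))

/-- hornGF-formulas:
`φ ::= ⊥ | ⊤ | x=y | R(x̄) | φ∧φ' | λ→φ | ∃ȳ(G(x̄ȳ)∧φ) | ∀ȳ(G(x̄ȳ)→φ)`
with `λ` in GF∃ and `G` an atomic formula containing all variables of `x̄ȳ`. -/
inductive GFO.IsHornGF : GFO Rel ar → Prop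
  | bot : IsHornGF .bot
  | top : IsHornGF .top
  | eq (x y : ℕ) : IsHornGF (.eq x y)
  | rel (R : Rel) (t : Fin (ar R) → ℕ) : IsHornGF (.rel R t)
  | and {φ ψ : GFO Rel ar} : IsHornGF φ → IsHornGF ψ → IsHornGF (.and φ ψ)
  | imp {l φ : GFO Rel ar} : IsGFex l → IsHornGF φ → IsHornGF (.imp l φ)
  | ex {G φ : GFO Rel ar} (ys : List ℕ) : IsAtom G → φ.free ⊆ G.free →
      (∀ y ∈ ys, y ∈ G.free) → IsHornGF φ → IsHornGF (.ex ys (.and G φ))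
  | all {G φ : GFO Rel ar} (ys : List ℕ) : IsAtom G → φ.free ⊆ G.free →
      (∀ y ∈ ys, y ∈ G.free) → IsHornGF φ → IsHornGF (.all ys (.imp G φ))

/-- Disjunctions of negations of atoms. -/
inductive GFO.IsNegClause : GFO Rel ar → Prop
  | neg {φ : GFO Rel ar} : IsAtom φ → IsNegClause (.not φ)
  | or {φ ψ : GFO Rel ar} : IsNegClause φ → IsNegClause ψ → IsNegClause (.or φ ψ)

/-- Basic Horn formulas: disjunctions of formulas at most one of which is an atom and
the remaining ones negations of atoms. -/
inductive GFO.IsBasicHorn : GFO Rel ar → Prop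
  | pos {φ : GFO Rel ar} : IsAtom φ → IsBasicHorn φ
  | neg {φ : GFO Rel ar} : IsNegClause φ → IsBasicHorn φ
  | orL {φ ψ : GFO Rel ar} : IsNegClause φ → IsBasicHorn ψ → IsBasicHorn (.or φ ψ)
  | orR {φ ψ : GFO Rel ar} : IsBasicHorn φ → IsNegClause ψ → IsBasicHorn (.or φ ψ)

/-- Horn formulas: constructed from basic Horn formulas using ∧, ∃ and ∀. -/
inductive GFO.IsHornFO : GFO Rel ar → Prop
  | basic {φ : GFO Rel ar} : IsBasicHorn φ → IsHornFO φ
  | and {φ ψ : GFO Rel ar} : IsHornFO φ → IsHornFO ψ → IsHornFO (.and φ ψ)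
  | ex (ys : List ℕ) {φ : GFO Rel ar} : IsHornFO φ → IsHornFO (.ex ys φ)
  | all (ys : List ℕ) {φ : GFO Rel ar} : IsHornFO φ → IsHornFO (.all ys φ)


namespace GFO

/-- Size of a formula. -/
def size : GFO Rel ar → ℕ
  | .top | .bot | .eq _ _ | .rel _ _ => 0
  | .not φ => φ.size + 1
  | .and φ ψ | .or φ ψ | .imp φ ψ => φ.size + ψ.size + 1
  | .ex _ φ | .all _ φ => φ.size + 1

/-- Simultaneous renaming: free variables via `σ`, bound variables via `· + N`. -/
def ren (σ : ℕ → ℕ) (N : ℕ) : GFO Rel ar → GFO Rel ar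
  | .top => .top
  | .bot => .bot
  | .eq x y => .eq (σ x) (σ y)
  | .rel R t => .rel R (fun i => σ (t i))
  | .not φ => .not (ren σ N φ)
  | .and φ ψ => .and (ren σ N φ) (ren σ N ψ)
  | .or φ ψ => .or (ren σ N φ) (ren σ N ψ)
  | .imp φ ψ => .imp (ren σ N φ) (ren σ N ψ)
  | .ex ys φ => .ex (ys.map (· + N)) (ren (fun n => if n ∈ ys then n + N else σ n) N φ)
  | .all ys φ => .all (ys.map (· + N)) (ren (fun n => if n ∈ ys then n + N else σ n) N φ)

/-- A good renaming either stays below `N` or shifts by exactly `N`. -/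
def Good (σ : ℕ → ℕ) (N : ℕ) : Prop := ∀ n, σ n < N ∨ σ n = n + N

theorem Good.ext {σ : ℕ → ℕ} {N : ℕ} (h : Good σ N) (ys : List ℕ) :
    Good (fun n => if n ∈ ys then n + N else σ n) N := by
  intro n
  by_cases hn : n ∈ ys <;> simp [hn]
  exact h n

theorem size_ren (N : ℕ) (φ : GFO Rel ar) : ∀ σ, (ren σ N φ).size = φ.size := by
  induction φ <;> intro σ <;> simp [ren, size, *]

theorem free_finite (φ : GFO Rel ar) : φ.free.Finite := by
  induction φ with
  | top => exact Set.finite_empty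
  | bot => exact Set.finite_empty
  | eq x y => exact (Set.finite_singleton y).insert x
  | rel R t => exact Set.finite_range t
  | not φ ih => exact ih
  | and φ ψ ih1 ih2 => exact ih1.union ih2
  | or φ ψ ih1 ih2 => exact ih1.union ih2
  | imp φ ψ ih1 ih2 => exact ih1.union ih2
  | ex ys φ ih => exact ih.diff
  | all ys φ ih => exact ih.diff

theorem free_lt (φ : GFO Rel ar) : ∃ N, ∀ n ∈ φ.free, n < N := by
  obtain ⟨N, hN⟩ := (free_finite φ).bddAbove
  exact ⟨N + 1, fun n hn => Nat.lt_succ_of_le (hN hn)⟩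

theorem sem_mono (M : GStr Rel ar D) (φ : GFO Rel ar) :
    ∀ v v' : ℕ → D, (∀ n ∈ φ.free, v n = v' n) → φ.sem M v → φ.sem M v' := by
  induction φ with intro v v' h hs
  | top => trivial
  | bot => exact hs
  | eq x y =>
      simp only [sem] at hs ⊢
      rw [← h x (by simp [free]), ← h y (by simp [free])]; exact hs
  | rel R t =>
      simp only [sem] at hs ⊢
      have : (fun i => v' (t i)) = fun i => v (t i) :=
        funext fun i => (h (t i) ⟨i, rfl⟩).symm
      rw [this]; exact hs
  | not φ ih =>
      simp only [sem] at hs ⊢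
      exact fun hv' => hs (ih v' v (fun n hn => (h n hn).symm) hv')
  | and φ ψ ih1 ih2 =>
      exact ⟨ih1 v v' (fun n hn => h n (Or.inl hn)) hs.1,
             ih2 v v' (fun n hn => h n (Or.inr hn)) hs.2⟩
  | or φ ψ ih1 ih2 =>
      exact hs.imp (ih1 v v' fun n hn => h n (Or.inl hn))
                   (ih2 v v' fun n hn => h n (Or.inr hn))
  | imp φ ψ ih1 ih2 =>
      exact fun hv' => ih2 v v' (fun n hn => h n (Or.inr hn))
        (hs (ih1 v' v (fun n hn => (h n (Or.inl hn)).symm) hv'))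
  | ex ys φ ih =>
      obtain ⟨w, hw, hφ⟩ := hs
      classical
      refine ⟨fun n => if n ∈ ys then w n else v' n, fun n hn => by simp [hn], ?_⟩
      refine ih w _ (fun n hn => ?_) hφ
      by_cases hn' : n ∈ ys
      · simp [hn']
      · simp only [hn', if_neg, ite_false]
        rw [hw n hn']
        exact h n ⟨hn, hn'⟩
  | all ys φ ih =>
      intro w' hw'
      classical
      have := hs (fun n => if n ∈ ys then w' n else v n) (fun n hn => by simp [hn])
      refine ih _ w' (fun n hn => ?_) this
      by_cases hn' : n ∈ ys
      · simp [hn']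
      · simp only [hn', if_neg, ite_false]
        rw [hw' n hn']
        exact h n ⟨hn, hn'⟩

theorem sem_congr (M : GStr Rel ar D) (φ : GFO Rel ar) (v v' : ℕ → D)
    (h : ∀ n ∈ φ.free, v n = v' n) : φ.sem M v ↔ φ.sem M v' :=
  ⟨sem_mono M φ v v' h, sem_mono M φ v' v fun n hn => (h n hn).symm⟩

end GFO

namespace GFO

theorem ren_sem (M : GStr Rel ar D) (N : ℕ) (φ : GFO Rel ar) :
    ∀ (σ : ℕ → ℕ) (v : ℕ → D), Good σ N →
      ((ren σ N φ).sem M v ↔ φ.sem M (fun n => v (σ n))) := by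
  induction φ with intro σ v hσ
  | top => exact Iff.rfl
  | bot => exact Iff.rfl
  | eq x y => exact Iff.rfl
  | rel R t => exact Iff.rfl
  | not φ ih => exact not_congr (ih σ v hσ)
  | and φ ψ ih1 ih2 => exact and_congr (ih1 σ v hσ) (ih2 σ v hσ)
  | or φ ψ ih1 ih2 => exact or_congr (ih1 σ v hσ) (ih2 σ v hσ)
  | imp φ ψ ih1 ih2 => exact imp_congr (ih1 σ v hσ) (ih2 σ v hσ)
  | ex ys φ ih =>
      classical
      set σ' : ℕ → ℕ := fun n => if n ∈ ys then n + N else σ n with hσ'def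
      have hσ' : Good σ' N := hσ.ext ys
      have hnot : ∀ n, n ∉ ys → σ n ∉ ys.map (· + N) := by
        intro n hn hmem
        obtain ⟨y, hy, hyn⟩ := List.mem_map.mp hmem
        rcases hσ n with h1 | h1
        · omega
        · have : n = y := by omega
          exact hn (this ▸ hy)
      simp only [ren, sem]
      constructor
      · rintro ⟨w, hw, hb⟩
        refine ⟨fun n => w (σ' n), fun n hn => ?_, (ih σ' w hσ').mp hb⟩
        show w (σ' n) = v (σ n)
        rw [show σ' n = σ n from if_neg hn]
        exact hw (σ n) (hnot n hn)
      · rintro ⟨u, hu, hb⟩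
        set w : ℕ → D := fun m => if h : N ≤ m ∧ m - N ∈ ys then u (m - N) else v m
          with hwdef
        have hwσ' : (fun n => w (σ' n)) = u := by
          funext n
          by_cases hn : n ∈ ys
          · have h1 : σ' n = n + N := if_pos hn
            rw [h1]
            have : N ≤ n + N ∧ n + N - N ∈ ys :=
              ⟨by omega, by simpa using hn⟩
            show (if h : N ≤ n + N ∧ n + N - N ∈ ys then u (n + N - N) else v (n + N)) = u n
            rw [dif_pos this]
            congr 1
            omega
          · have h1 : σ' n = σ n := if_neg hn
            rw [h1]
            rcases hσ n with h2 | h2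
            · have : ¬ (N ≤ σ n ∧ σ n - N ∈ ys) := by omega
              rw [hwdef]; simp only [this, dif_neg, not_false_iff]
              exact (hu n hn).symm
            · have : ¬ (N ≤ σ n ∧ σ n - N ∈ ys) := by
                rintro ⟨_, hmem⟩
                have : σ n - N = n := by omega
                exact hn (this ▸ hmem)
              rw [hwdef]; simp only [this, dif_neg, not_false_iff]
              rw [h2]
              have : u n = v (σ n) := hu n hn
              rw [this, h2]
        refine ⟨w, fun m hm => ?_, ?_⟩
        · rw [hwdef]
          have : ¬ (N ≤ m ∧ m - N ∈ ys) := by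
            rintro ⟨h1, h2⟩
            exact hm (List.mem_map.mpr ⟨m - N, h2, by omega⟩)
          simp only [this, dif_neg, not_false_iff]
        · rw [ih σ' w hσ', hwσ']
          exact hb
  | all ys φ ih =>
      classical
      set σ' : ℕ → ℕ := fun n => if n ∈ ys then n + N else σ n with hσ'def
      have hσ' : Good σ' N := hσ.ext ys
      have hnot : ∀ n, n ∉ ys → σ n ∉ ys.map (· + N) := by
        intro n hn hmem
        obtain ⟨y, hy, hyn⟩ := List.mem_map.mp hmem
        rcases hσ n with h1 | h1
        · omega
        · have : n = y := by omega
          exact hn (this ▸ hy)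
      simp only [ren, sem]
      constructor
      · rintro hb u hu
        set w : ℕ → D := fun m => if h : N ≤ m ∧ m - N ∈ ys then u (m - N) else v m
          with hwdef
        have hwσ' : (fun n => w (σ' n)) = u := by
          funext n
          by_cases hn : n ∈ ys
          · have h1 : σ' n = n + N := if_pos hn
            rw [h1]
            have : N ≤ n + N ∧ n + N - N ∈ ys :=
              ⟨by omega, by simpa using hn⟩
            show (if h : N ≤ n + N ∧ n + N - N ∈ ys then u (n + N - N) else v (n + N)) = u n
            rw [dif_pos this]
            congr 1
            omega
          · have h1 : σ' n = σ n := if_neg hn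
            rw [h1]
            rcases hσ n with h2 | h2
            · have : ¬ (N ≤ σ n ∧ σ n - N ∈ ys) := by omega
              rw [hwdef]; simp only [this, dif_neg, not_false_iff]
              exact (hu n hn).symm
            · have : ¬ (N ≤ σ n ∧ σ n - N ∈ ys) := by
                rintro ⟨_, hmem⟩
                have : σ n - N = n := by omega
                exact hn (this ▸ hmem)
              rw [hwdef]; simp only [this, dif_neg, not_false_iff]
              rw [h2]
              have : u n = v (σ n) := hu n hn
              rw [this, h2]
        have hw : ∀ m, m ∉ ys.map (· + N) → w m = v m := by
          intro m hm
          rw [hwdef]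
          have : ¬ (N ≤ m ∧ m - N ∈ ys) := by
            rintro ⟨h1, h2⟩
            exact hm (List.mem_map.mpr ⟨m - N, h2, by omega⟩)
          simp only [this, dif_neg, not_false_iff]
        have := (ih σ' w hσ').mp (hb w hw)
        rwa [hwσ'] at this
      · rintro hb w hw
        rw [ih σ' w hσ']
        refine hb _ (fun n hn => ?_)
        show w (σ' n) = v (σ n)
        rw [show σ' n = σ n from if_neg hn]
        exact hw (σ n) (hnot n hn)

theorem ren_free (N : ℕ) (φ : GFO Rel ar) :
    ∀ σ : ℕ → ℕ, Good σ N → (ren σ N φ).free = σ '' φ.free := by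
  induction φ with intro σ hσ
  | top => simp [ren, free]
  | bot => simp [ren, free]
  | eq x y => simp [ren, free, Set.image_pair]
  | rel R t =>
      show Set.range (fun i => σ (t i)) = σ '' Set.range t
      rw [← Set.range_comp]; rfl
  | not φ ih => exact ih σ hσ
  | and φ ψ ih1 ih2 =>
      show (ren σ N φ).free ∪ (ren σ N ψ).free = σ '' (φ.free ∪ ψ.free)
      rw [ih1 σ hσ, ih2 σ hσ, Set.image_union]
  | or φ ψ ih1 ih2 =>
      show (ren σ N φ).free ∪ (ren σ N ψ).free = σ '' (φ.free ∪ ψ.free)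
      rw [ih1 σ hσ, ih2 σ hσ, Set.image_union]
  | imp φ ψ ih1 ih2 =>
      show (ren σ N φ).free ∪ (ren σ N ψ).free = σ '' (φ.free ∪ ψ.free)
      rw [ih1 σ hσ, ih2 σ hσ, Set.image_union]
  | ex ys φ ih =>
      classical
      set σ' : ℕ → ℕ := fun n => if n ∈ ys then n + N else σ n with hσ'def
      have hσ' : Good σ' N := hσ.ext ys
      show (ren σ' N φ).free \ {n | n ∈ ys.map (· + N)} = σ '' (φ.free \ {n | n ∈ ys})
      rw [ih σ' hσ']
      ext m
      simp only [Set.mem_diff, Set.mem_image, Set.mem_setOf_eq, List.mem_map]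
      constructor
      · rintro ⟨⟨x, hx, rfl⟩, hnm⟩
        by_cases hxy : x ∈ ys
        · exact absurd ⟨x, hxy, (if_pos hxy).symm⟩ hnm
        · exact ⟨x, ⟨hx, hxy⟩, (if_neg hxy).symm⟩
      · rintro ⟨x, ⟨hx, hxy⟩, rfl⟩
        have hx' : σ' x = σ x := if_neg hxy
        refine ⟨⟨x, hx, hx'⟩, ?_⟩
        rintro ⟨y, hy, hyx⟩
        rcases hσ x with h1 | h1
        · omega
        · have : x = y := by omega
          exact hxy (this ▸ hy)
  | all ys φ ih =>
      classical
      set σ' : ℕ → ℕ := fun n => if n ∈ ys then n + N else σ n with hσ'def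
      have hσ' : Good σ' N := hσ.ext ys
      show (ren σ' N φ).free \ {n | n ∈ ys.map (· + N)} = σ '' (φ.free \ {n | n ∈ ys})
      rw [ih σ' hσ']
      ext m
      simp only [Set.mem_diff, Set.mem_image, Set.mem_setOf_eq, List.mem_map]
      constructor
      · rintro ⟨⟨x, hx, rfl⟩, hnm⟩
        by_cases hxy : x ∈ ys
        · exact absurd ⟨x, hxy, (if_pos hxy).symm⟩ hnm
        · exact ⟨x, ⟨hx, hxy⟩, (if_neg hxy).symm⟩
      · rintro ⟨x, ⟨hx, hxy⟩, rfl⟩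
        have hx' : σ' x = σ x := if_neg hxy
        refine ⟨⟨x, hx, hx'⟩, ?_⟩
        rintro ⟨y, hy, hyx⟩
        rcases hσ x with h1 | h1
        · omega
        · have : x = y := by omega
          exact hxy (this ▸ hy)

end GFO

namespace GFO

theorem IsAtom.ren' {φ : GFO Rel ar} (h : φ.IsAtom) (σ : ℕ → ℕ) (N : ℕ) :
    (ren σ N φ).IsAtom := by
  cases h with
  | eq x y => exact .eq _ _
  | rel R t => exact .rel _ _

theorem IsNegClause.ren' {φ : GFO Rel ar} (h : φ.IsNegClause) (σ : ℕ → ℕ) (N : ℕ) :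
    (ren σ N φ).IsNegClause := by
  induction h with
  | neg h => exact .neg (h.ren' σ N)
  | or h1 h2 ih1 ih2 => exact .or ih1 ih2

theorem IsBasicHorn.ren' {φ : GFO Rel ar} (h : φ.IsBasicHorn) (σ : ℕ → ℕ) (N : ℕ) :
    (ren σ N φ).IsBasicHorn := by
  induction h with
  | pos h => exact .pos (h.ren' σ N)
  | neg h => exact .neg (h.ren' σ N)
  | orL h1 h2 ih => exact .orL (h1.ren' σ N) ih
  | orR h1 h2 ih => exact .orR ih (h2.ren' σ N)

theorem IsHornFO.ren' {φ : GFO Rel ar} (h : φ.IsHornFO) (N : ℕ) :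
    ∀ σ : ℕ → ℕ, (ren σ N φ).IsHornFO := by
  induction h with intro σ
  | basic h => exact .basic (h.ren' σ N)
  | and h1 h2 ih1 ih2 => exact .and (ih1 σ) (ih2 σ)
  | ex ys h ih => exact .ex _ (ih _)
  | all ys h ih => exact .all _ (ih _)

theorem IsGFex.ren' {φ : GFO Rel ar} (h : φ.IsGFex) (N : ℕ) :
    ∀ σ : ℕ → ℕ, Good σ N → (ren σ N φ).IsGFex := by
  induction h with intro σ hσ
  | atom h => exact .atom (h.ren' σ N)
  | and h1 h2 ih1 ih2 => exact .and (ih1 σ hσ) (ih2 σ hσ)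
  | or h1 h2 ih1 ih2 => exact .or (ih1 σ hσ) (ih2 σ hσ)
  | @ex G φ ys hG hsub hys hφ ih =>
      classical
      have hσ' : Good (fun n => if n ∈ ys then n + N else σ n) N := hσ.ext ys
      refine IsGFex.ex (G := ren _ N G) (φ := ren _ N φ) (ys.map (· + N))
        (hG.ren' _ N) ?_ ?_ (ih _ hσ')
      · rw [ren_free N φ _ hσ', ren_free N G _ hσ']
        exact Set.image_mono hsub
      · intro y hy
        obtain ⟨z, hz, rfl⟩ := List.mem_map.mp hy
        rw [ren_free N G _ hσ']
        exact ⟨z, hys z hz, if_pos hz⟩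

/-- The standard good renaming that is the identity below `N`. -/
theorem good_base (N : ℕ) : Good (fun n => if n < N then n else n + N) N := by
  intro n
  by_cases h : n < N <;> simp [h]

end GFO

namespace GFO

theorem lemB : ∀ (k : ℕ) (A ψ : GFO Rel ar), ψ.size < k → A.IsAtom → ψ.IsHornFO →
    ∃ χ : GFO Rel ar, χ.IsHornFO ∧ χ.free = A.free ∪ ψ.free ∧
      ∀ (D : Type) (M : GStr Rel ar D) (v : ℕ → D),
        χ.sem M v ↔ (A.sem M v → ψ.sem M v) := by
  intro k
  induction k with
  | zero => intro A ψ hk; omega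
  | succ k ih =>
    intro A ψ hk hA hψ
    cases hψ with
    | @basic ψ hb =>
        refine ⟨.or (.not A) ψ, .basic (.orL (.neg hA) hb), rfl, fun D M v => ?_⟩
        show (¬ A.sem M v ∨ ψ.sem M v) ↔ _
        tauto
    | @and ψ1 ψ2 h1 h2 =>
        have hsz : ψ1.size + ψ2.size + 1 = (GFO.and ψ1 ψ2).size := rfl
        obtain ⟨χ1, hH1, hf1, hs1⟩ := ih A ψ1 (by omega) hA h1
        obtain ⟨χ2, hH2, hf2, hs2⟩ := ih A ψ2 (by omega) hA h2
        refine ⟨.and χ1 χ2, .and hH1 hH2, ?_, fun D M v => ?_⟩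
        · show χ1.free ∪ χ2.free = A.free ∪ (ψ1.free ∪ ψ2.free)
          rw [hf1, hf2]
          ext n; simp only [Set.mem_union]; tauto
        · show (χ1.sem M v ∧ χ2.sem M v) ↔ (A.sem M v → ψ1.sem M v ∧ ψ2.sem M v)
          rw [hs1 D M v, hs2 D M v]; tauto
    | @ex ys ψ' h' =>
        classical
        obtain ⟨N1, hN1⟩ := free_lt (GFO.ex ys ψ')
        obtain ⟨N2, hN2⟩ := free_lt A
        set N := max N1 N2 with hNdef
        set σ0 : ℕ → ℕ := fun n => if n < N then n else n + N with hσ0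
        have hg : Good σ0 N := good_base N
        set σ' : ℕ → ℕ := fun n => if n ∈ ys then n + N else σ0 n with hσ'
        have hg' : Good σ' N := hg.ext ys
        set ψ'' := ren σ' N ψ' with hψ''
        set ys' := ys.map (· + N) with hys'
        have hrw : ren σ0 N (GFO.ex ys ψ') = GFO.ex ys' ψ'' := rfl
        have hAfree : ∀ n ∈ A.free, n ∉ ys' := by
          intro n hn hmem
          obtain ⟨y, hy, hyn⟩ := List.mem_map.mp hmem
          have h1 := hN2 n hn
          have h2 : N2 ≤ N := le_max_right N1 N2
          omega
        have hψfree : ∀ n ∈ (GFO.ex ys ψ').free, σ0 n = n := by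
          intro n hn
          have : n < N := lt_of_lt_of_le (hN1 n hn) (le_max_left _ _)
          exact if_pos this
        have himg : σ0 '' (GFO.ex ys ψ').free = (GFO.ex ys ψ').free := by
          ext m
          constructor
          · rintro ⟨x, hx, rfl⟩; rw [hψfree x hx]; exact hx
          · intro hm; exact ⟨m, hm, hψfree m hm⟩
        have hrenfree : (GFO.ex ys' ψ'').free = (GFO.ex ys ψ').free := by
          rw [← hrw, ren_free N _ σ0 hg, himg]
        have hrensem : ∀ (D : Type) (M : GStr Rel ar D) (v : ℕ → D),
            (GFO.ex ys' ψ'').sem M v ↔ (GFO.ex ys ψ').sem M v := by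
          intro D M v
          rw [← hrw, ren_sem M N _ σ0 v hg]
          exact sem_congr M _ _ v (fun n hn => by rw [hψfree n hn])
        have hsz1 : (GFO.ex ys ψ').size = ψ'.size + 1 := rfl
        have hsz : ψ''.size < k := by rw [hψ'', size_ren]; omega
        obtain ⟨χ', hH', hf', hs'⟩ := ih A ψ'' hsz hA (h'.ren' N σ')
        refine ⟨.ex ys' χ', .ex ys' hH', ?_, fun D M v => ?_⟩
        · show χ'.free \ {n | n ∈ ys'} = A.free ∪ (GFO.ex ys ψ').free
          rw [hf', Set.union_diff_distrib]
          have h1 : A.free \ {n | n ∈ ys'} = A.free := by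
            ext n
            simp only [Set.mem_diff, Set.mem_setOf_eq]
            exact ⟨And.left, fun hn => ⟨hn, hAfree n hn⟩⟩
          have h2 : ψ''.free \ {n | n ∈ ys'} = (GFO.ex ys ψ').free := hrenfree
          rw [h1, h2]
        · have key : (GFO.ex ys' χ').sem M v ↔ (A.sem M v → (GFO.ex ys' ψ'').sem M v) := by
            show (∃ w, (∀ n, n ∉ ys' → w n = v n) ∧ χ'.sem M w) ↔
              (A.sem M v → ∃ w, (∀ n, n ∉ ys' → w n = v n) ∧ ψ''.sem M w)
            constructor
            · rintro ⟨w, hw, hχ⟩ hAv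
              have hAw : A.sem M w :=
                sem_mono M A v w (fun n hn => (hw n (hAfree n hn)).symm) hAv
              exact ⟨w, hw, (hs' D M w).mp hχ hAw⟩
            · intro h
              by_cases hAv : A.sem M v
              · obtain ⟨w, hw, hψw⟩ := h hAv
                exact ⟨w, hw, (hs' D M w).mpr fun _ => hψw⟩
              · exact ⟨v, fun _ _ => rfl, (hs' D M v).mpr fun hAv' => absurd hAv' hAv⟩
          rw [show ((GFO.ex ys' χ').sem M v) = ((GFO.ex ys' χ').sem M v) from rfl] at key
          rw [hrensem D M v] at key
          exact key
    | @all ys ψ' h' =>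
        classical
        obtain ⟨N1, hN1⟩ := free_lt (GFO.all ys ψ')
        obtain ⟨N2, hN2⟩ := free_lt A
        set N := max N1 N2 with hNdef
        set σ0 : ℕ → ℕ := fun n => if n < N then n else n + N with hσ0
        have hg : Good σ0 N := good_base N
        set σ' : ℕ → ℕ := fun n => if n ∈ ys then n + N else σ0 n with hσ'
        have hg' : Good σ' N := hg.ext ys
        set ψ'' := ren σ' N ψ' with hψ''
        set ys' := ys.map (· + N) with hys'
        have hrw : ren σ0 N (GFO.all ys ψ') = GFO.all ys' ψ'' := rfl
        have hAfree : ∀ n ∈ A.free, n ∉ ys' := by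
          intro n hn hmem
          obtain ⟨y, hy, hyn⟩ := List.mem_map.mp hmem
          have h1 := hN2 n hn
          have h2 : N2 ≤ N := le_max_right N1 N2
          omega
        have hψfree : ∀ n ∈ (GFO.all ys ψ').free, σ0 n = n := by
          intro n hn
          have : n < N := lt_of_lt_of_le (hN1 n hn) (le_max_left _ _)
          exact if_pos this
        have himg : σ0 '' (GFO.all ys ψ').free = (GFO.all ys ψ').free := by
          ext m
          constructor
          · rintro ⟨x, hx, rfl⟩; rw [hψfree x hx]; exact hx
          · intro hm; exact ⟨m, hm, hψfree m hm⟩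
        have hrenfree : (GFO.all ys' ψ'').free = (GFO.all ys ψ').free := by
          rw [← hrw, ren_free N _ σ0 hg, himg]
        have hrensem : ∀ (D : Type) (M : GStr Rel ar D) (v : ℕ → D),
            (GFO.all ys' ψ'').sem M v ↔ (GFO.all ys ψ').sem M v := by
          intro D M v
          rw [← hrw, ren_sem M N _ σ0 v hg]
          exact sem_congr M _ _ v (fun n hn => by rw [hψfree n hn])
        have hsz1 : (GFO.all ys ψ').size = ψ'.size + 1 := rfl
        have hsz : ψ''.size < k := by rw [hψ'', size_ren]; omega
        obtain ⟨χ', hH', hf', hs'⟩ := ih A ψ'' hsz hA (h'.ren' N σ')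
        refine ⟨.all ys' χ', .all ys' hH', ?_, fun D M v => ?_⟩
        · show χ'.free \ {n | n ∈ ys'} = A.free ∪ (GFO.all ys ψ').free
          rw [hf', Set.union_diff_distrib]
          have h1 : A.free \ {n | n ∈ ys'} = A.free := by
            ext n
            simp only [Set.mem_diff, Set.mem_setOf_eq]
            exact ⟨And.left, fun hn => ⟨hn, hAfree n hn⟩⟩
          have h2 : ψ''.free \ {n | n ∈ ys'} = (GFO.all ys ψ').free := hrenfree
          rw [h1, h2]
        · have key : (GFO.all ys' χ').sem M v ↔ (A.sem M v → (GFO.all ys' ψ'').sem M v) := by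
            show (∀ w, (∀ n, n ∉ ys' → w n = v n) → χ'.sem M w) ↔
              (A.sem M v → ∀ w, (∀ n, n ∉ ys' → w n = v n) → ψ''.sem M w)
            constructor
            · intro H hAv w hw
              have hAw : A.sem M w :=
                sem_mono M A v w (fun n hn => (hw n (hAfree n hn)).symm) hAv
              exact (hs' D M w).mp (H w hw) hAw
            · intro H w hw
              refine (hs' D M w).mpr fun hAw => ?_
              have hAv : A.sem M v :=
                sem_mono M A w v (fun n hn => hw n (hAfree n hn)) hAw
              exact H hAv w hw
          rw [hrensem D M v] at key
          exact key

end GFO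

namespace GFO

theorem lemA : ∀ (k : ℕ) (l ψ : GFO Rel ar), l.size < k → l.IsGFex → ψ.IsHornFO →
    ∃ χ : GFO Rel ar, χ.IsHornFO ∧ χ.free = l.free ∪ ψ.free ∧
      ∀ (D : Type) (M : GStr Rel ar D) (v : ℕ → D),
        χ.sem M v ↔ (l.sem M v → ψ.sem M v) := by
  intro k
  induction k with
  | zero => intro l ψ hk; omega
  | succ k ih =>
    intro l ψ hk hl hψ
    cases hl with
    | atom hA => exact lemB (ψ.size + 1) l ψ (Nat.lt_succ_self _) hA hψ
    | @and l1 l2 h1 h2 =>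
        have hsz : (GFO.and l1 l2).size = l1.size + l2.size + 1 := rfl
        obtain ⟨χ2, hH2, hf2, hs2⟩ := ih l2 ψ (by omega) h2 hψ
        obtain ⟨χ, hH, hf, hs⟩ := ih l1 χ2 (by omega) h1 hH2
        refine ⟨χ, hH, ?_, fun D M v => ?_⟩
        · rw [hf, hf2]
          show _ = (l1.free ∪ l2.free) ∪ ψ.free
          rw [Set.union_assoc]
        · rw [hs D M v, hs2 D M v]
          show _ ↔ ((l1.sem M v ∧ l2.sem M v) → ψ.sem M v)
          tauto
    | @or l1 l2 h1 h2 =>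
        have hsz : (GFO.or l1 l2).size = l1.size + l2.size + 1 := rfl
        obtain ⟨χ1, hH1, hf1, hs1⟩ := ih l1 ψ (by omega) h1 hψ
        obtain ⟨χ2, hH2, hf2, hs2⟩ := ih l2 ψ (by omega) h2 hψ
        refine ⟨.and χ1 χ2, .and hH1 hH2, ?_, fun D M v => ?_⟩
        · show χ1.free ∪ χ2.free = (l1.free ∪ l2.free) ∪ ψ.free
          rw [hf1, hf2]
          ext n; simp only [Set.mem_union]; tauto
        · show (χ1.sem M v ∧ χ2.sem M v) ↔ ((l1.sem M v ∨ l2.sem M v) → ψ.sem M v)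
          rw [hs1 D M v, hs2 D M v]; tauto
    | @ex G φ0 ys hG hsub hys hφ0 =>
        classical
        obtain ⟨N1, hN1⟩ := free_lt (GFO.ex ys (GFO.and G φ0))
        obtain ⟨N2, hN2⟩ := free_lt ψ
        set N := max N1 N2 with hNdef
        have hN1le : N1 ≤ N := le_max_left N1 N2
        have hN2le : N2 ≤ N := le_max_right N1 N2
        set σ0 : ℕ → ℕ := fun n => if n < N then n else n + N with hσ0
        have hg : Good σ0 N := good_base N
        set σ' : ℕ → ℕ := fun n => if n ∈ ys then n + N else σ0 n with hσ'
        have hg' : Good σ' N := hg.ext ys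
        set G'' := ren σ' N G with hG''
        set φ'' := ren σ' N φ0 with hφ''
        set ys' := ys.map (· + N) with hys'
        have hrw : ren σ0 N (GFO.ex ys (GFO.and G φ0)) = GFO.ex ys' (GFO.and G'' φ'') := rfl
        have hysN : ∀ m ∈ ys', N ≤ m := by
          intro m hm
          obtain ⟨y, hy, hym⟩ := List.mem_map.mp hm
          omega
        have hψys' : ∀ n ∈ ψ.free, n ∉ ys' := by
          intro n hn hmem
          have := hN2 n hn
          have := hysN n hmem
          omega
        have hlfree : ∀ n ∈ (GFO.ex ys (GFO.and G φ0)).free, σ0 n = n := by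
          intro n hn
          have : n < N := lt_of_lt_of_le (hN1 n hn) hN1le
          exact if_pos this
        have himg : σ0 '' (GFO.ex ys (GFO.and G φ0)).free
            = (GFO.ex ys (GFO.and G φ0)).free := by
          ext m
          constructor
          · rintro ⟨x, hx, rfl⟩; rw [hlfree x hx]; exact hx
          · intro hm; exact ⟨m, hm, hlfree m hm⟩
        have hrensem : ∀ (D : Type) (M : GStr Rel ar D) (v : ℕ → D),
            (GFO.ex ys' (GFO.and G'' φ'')).sem M v
              ↔ (GFO.ex ys (GFO.and G φ0)).sem M v := by
          intro D M v
          rw [← hrw, ren_sem M N _ σ0 v hg]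
          exact sem_congr M _ _ v (fun n hn => by rw [hlfree n hn])
        -- facts about σ' on G.free
        have hfσ' : ∀ x ∈ G.free, x ∉ ys → σ' x = x ∧ x < N := by
          intro x hx hxys
          have hxl : x ∈ (GFO.ex ys (GFO.and G φ0)).free := ⟨Or.inl hx, hxys⟩
          have hxN : x < N := lt_of_lt_of_le (hN1 x hxl) hN1le
          refine ⟨?_, hxN⟩
          show (if x ∈ ys then x + N else σ0 x) = x
          rw [if_neg hxys]
          exact if_pos hxN
        have hsz1 : (GFO.ex ys (GFO.and G φ0)).size = G.size + φ0.size + 2 := rfl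
        obtain ⟨χ1, hH1, hf1, hs1⟩ :=
          ih φ'' ψ (by rw [hφ'', size_ren]; omega) (hφ0.ren' N σ' hg') hψ
        obtain ⟨χ2, hH2, hf2, hs2⟩ :=
          ih G'' χ1 (by rw [hG'', size_ren]; omega) (.atom (hG.ren' σ' N)) hH1
        have hGf : G''.free = σ' '' G.free := ren_free N G σ' hg'
        have hφf : φ''.free = σ' '' φ0.free := ren_free N φ0 σ' hg'
        refine ⟨.all ys' χ2, .all ys' hH2, ?_, fun D M v => ?_⟩
        · show χ2.free \ {n | n ∈ ys'} = (GFO.ex ys (GFO.and G φ0)).free ∪ ψ.free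
          rw [hf2, hf1, hGf, hφf]
          ext m
          simp only [Set.mem_diff, Set.mem_union, Set.mem_setOf_eq, Set.mem_image]
          constructor
          · rintro ⟨hd, hm'⟩
            rcases hd with ⟨x, hx, rfl⟩ | ⟨x, hx, rfl⟩ | hm
            · by_cases hxys : x ∈ ys
              · exfalso
                apply hm'
                rw [show σ' x = x + N from if_pos hxys]
                exact List.mem_map.mpr ⟨x, hxys, rfl⟩
              · obtain ⟨he, _⟩ := hfσ' x hx hxys
                rw [he]
                exact Or.inl ⟨Or.inl hx, hxys⟩
            · have hxG : x ∈ G.free := hsub hx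
              by_cases hxys : x ∈ ys
              · exfalso
                apply hm'
                rw [show σ' x = x + N from if_pos hxys]
                exact List.mem_map.mpr ⟨x, hxys, rfl⟩
              · obtain ⟨he, _⟩ := hfσ' x hxG hxys
                rw [he]
                exact Or.inl ⟨Or.inr hx, hxys⟩
            · exact Or.inr hm
          · rintro (⟨hmG, hmys⟩ | hm)
            · have hmG' : m ∈ G.free := by
                rcases hmG with h | h
                · exact h
                · exact hsub h
              obtain ⟨he, hltN⟩ := hfσ' m hmG' hmys
              refine ⟨Or.inl ⟨m, hmG', he⟩, fun hmem => ?_⟩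
              have := hysN m hmem
              omega
            · exact ⟨Or.inr (Or.inr hm), hψys' m hm⟩
        · rw [← hrensem D M v]
          show (∀ w, (∀ n, n ∉ ys' → w n = v n) → χ2.sem M w) ↔
            ((∃ w, (∀ n, n ∉ ys' → w n = v n) ∧ (G''.sem M w ∧ φ''.sem M w))
              → ψ.sem M v)
          constructor
          · rintro H ⟨w, hw, hGw, hφw⟩
            have h1 : χ1.sem M w := (hs2 D M w).mp (H w hw) hGw
            have h2 : ψ.sem M w := (hs1 D M w).mp h1 hφw
            exact sem_mono M ψ w v (fun n hn => hw n (hψys' n hn)) h2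
          · intro H w hw
            refine (hs2 D M w).mpr fun hGw => (hs1 D M w).mpr fun hφw => ?_
            have hψv : ψ.sem M v := H ⟨w, hw, hGw, hφw⟩
            exact sem_mono M ψ v w (fun n hn => (hw n (hψys' n hn)).symm) hψv

end GFO

/-- Every hornGF-formula `φ(x̄)` is equivalent to a Horn first-order formula with the
same free variables. -/
theorem hornGF_equiv_hornFO {Rel : Type} {ar : Rel → ℕ}
    (φ : GFO Rel ar) (h : φ.IsHornGF) :
    ∃ ψ : GFO Rel ar, ψ.IsHornFO ∧ ψ.free = φ.free ∧
      ∀ (D : Type) [Nonempty D] (M : GStr Rel ar D) (v : ℕ → D),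
        φ.sem M v ↔ ψ.sem M v := by
  induction h with
  | bot =>
      refine ⟨.all [0] (.not (.eq 0 0)), .all [0] (.basic (.neg (.neg (.eq 0 0)))), ?_, ?_⟩
      · ext n; simp [GFO.free]
      · intro D _ M v
        show False ↔ (∀ w : ℕ → D, (∀ n, n ∉ [0] → w n = v n) → ¬ (w 0 = w 0))
        constructor
        · exact False.elim
        · intro H; exact H v (fun _ _ => rfl) rfl
  | top =>
      refine ⟨.all [0] (.eq 0 0), .all [0] (.basic (.pos (.eq 0 0))), ?_, ?_⟩
      · ext n; simp [GFO.free]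
      · intro D _ M v
        show True ↔ (∀ w : ℕ → D, (∀ n, n ∉ [0] → w n = v n) → w 0 = w 0)
        exact ⟨fun _ _ _ => rfl, fun _ => trivial⟩
  | eq x y => exact ⟨.eq x y, .basic (.pos (.eq x y)), rfl, fun D _ M v => Iff.rfl⟩
  | rel R t => exact ⟨.rel R t, .basic (.pos (.rel R t)), rfl, fun D _ M v => Iff.rfl⟩
  | @and φ1 φ2 h1 h2 ih1 ih2 =>
      obtain ⟨ψ1, hH1, hf1, hs1⟩ := ih1
      obtain ⟨ψ2, hH2, hf2, hs2⟩ := ih2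
      refine ⟨.and ψ1 ψ2, .and hH1 hH2, ?_, ?_⟩
      · show ψ1.free ∪ ψ2.free = φ1.free ∪ φ2.free
        rw [hf1, hf2]
      · intro D _ M v
        exact and_congr (hs1 D M v) (hs2 D M v)
  | @imp l φ0 hl hφ0 ih =>
      obtain ⟨ψ, hH, hf, hs⟩ := ih
      obtain ⟨χ, hHχ, hfχ, hsχ⟩ := GFO.lemA (l.size + 1) l ψ (Nat.lt_succ_self _) hl hH
      refine ⟨χ, hHχ, ?_, ?_⟩
      · rw [hfχ, hf]; rfl
      · intro D _ M v
        rw [hsχ D M v]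
        show (l.sem M v → φ0.sem M v) ↔ (l.sem M v → ψ.sem M v)
        exact imp_congr Iff.rfl (hs D M v)
  | @ex G φ0 ys hG hsub hys hφ0 ih =>
      obtain ⟨ψ, hH, hf, hs⟩ := ih
      refine ⟨.ex ys (.and G ψ), .ex ys (.and (.basic (.pos hG)) hH), ?_, ?_⟩
      · show (G.free ∪ ψ.free) \ {n | n ∈ ys} = (G.free ∪ φ0.free) \ {n | n ∈ ys}
        rw [hf]
      · intro D _ M v
        show (∃ w, (∀ n, n ∉ ys → w n = v n) ∧ (G.sem M w ∧ φ0.sem M w)) ↔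
             (∃ w, (∀ n, n ∉ ys → w n = v n) ∧ (G.sem M w ∧ ψ.sem M w))
        exact exists_congr fun w =>
          and_congr Iff.rfl (and_congr Iff.rfl (hs D M w))
  | @all G φ0 ys hG hsub hys hφ0 ih =>
      obtain ⟨ψ, hH, hf, hs⟩ := ih
      obtain ⟨χ, hHχ, hfχ, hsχ⟩ := GFO.lemB (ψ.size + 1) G ψ (Nat.lt_succ_self _) hG hH
      refine ⟨.all ys χ, .all ys hHχ, ?_, ?_⟩
      · show χ.free \ {n | n ∈ ys} = (G.free ∪ φ0.free) \ {n | n ∈ ys}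
        rw [hfχ, hf]
      · intro D _ M v
        show (∀ w, (∀ n, n ∉ ys → w n = v n) → (G.sem M w → φ0.sem M w)) ↔
             (∀ w, (∀ n, n ∉ ys → w n = v n) → χ.sem M w)
        exact forall_congr' fun w => imp_congr Iff.rfl
          ((hsχ D M w).trans (imp_congr Iff.rfl (hs D M w).symm)).symm
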